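/- Let ℓ ≥ 3 be prime and let G = (ℤ/ℓ') ⋊ ⟨Φ⟩ with ℓ' = 9 if ℓ = 3 and ℓ' = ℓ if ℓ > 3, where Φ has order ℓ' and acts on ℤ/ℓ' by multiplication by 1 + ℓα for some α ∈ ℤ/ℓ' (with α = 0 if ℓ > 3). Then for every homomorphism χ: G → ℤ/ℓ there exists a group homomorphism ρ: G → U₄(ℤ/ℓ) such that for all g ∈ G, all three superdiagonal entries of ρ(g) equal χ(g). -/

import Mathlib

/-- The upper unitriangular 4×4 matrix `M(a₁,a₂,a₃,u,v,w)` over `ℤ/ℓ`. -/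
def M4 {ℓ : ℕ} (a₁ a₂ a₃ u v w : ZMod ℓ) : Matrix (Fin 4) (Fin 4) (ZMod ℓ) :=
  !![1, a₁, u, v; 0, 1, a₂, w; 0, 0, 1, a₃; 0, 0, 0, 1]



section M4lemmas
variable {n : ℕ}

lemma M4_congr {a₁ a₂ a₃ u v w b₁ b₂ b₃ u' v' w' : ZMod n}
    (h₁ : a₁ = b₁) (h₂ : a₂ = b₂) (h₃ : a₃ = b₃) (h₄ : u = u') (h₅ : v = v') (h₆ : w = w') :
    M4 a₁ a₂ a₃ u v w = M4 b₁ b₂ b₃ u' v' w' := by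
  rw [h₁, h₂, h₃, h₄, h₅, h₆]

lemma M4_mul (a₁ a₂ a₃ u v w b₁ b₂ b₃ u' v' w' : ZMod n) :
    M4 a₁ a₂ a₃ u v w * M4 b₁ b₂ b₃ u' v' w' =
    M4 (a₁+b₁) (a₂+b₂) (a₃+b₃) (u+u'+a₁*b₂) (v+v'+a₁*w'+u*b₃) (w+w'+a₂*b₃) := by
  ext i j
  fin_cases i <;> fin_cases j <;>
    simp [M4, Matrix.mul_apply, Fin.sum_univ_succ, Matrix.vecHead, Matrix.vecTail] <;> ring

lemma M4_one : M4 (0:ZMod n) 0 0 0 0 0 = 1 := by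
  ext i j
  fin_cases i <;> fin_cases j <;> simp [M4, Matrix.one_apply, Matrix.vecHead, Matrix.vecTail]

lemma choose2_succ (k : ℕ) : (k+1).choose 2 = k.choose 2 + k := by
  rw [Nat.choose_succ_succ, Nat.choose_one_right, Nat.add_comm]

lemma choose3_succ (k : ℕ) : (k+1).choose 3 = k.choose 3 + k.choose 2 := by
  rw [Nat.choose_succ_succ, Nat.add_comm]

lemma M4_pow (b c : ZMod n) (k : ℕ) :
    (M4 b b b 0 0 c) ^ k =
    M4 ((k:ZMod n)*b) ((k:ZMod n)*b) ((k:ZMod n)*b) ((k.choose 2 : ZMod n)*b^2)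
      ((k.choose 3 : ZMod n)*b^3 + (k.choose 2 : ZMod n)*b*c)
      ((k.choose 2 : ZMod n)*b^2 + (k:ZMod n)*c) := by
  induction k with
  | zero => simp [← M4_one]
  | succ k ih =>
    rw [pow_succ, ih, M4_mul]
    rw [choose2_succ, choose3_succ]
    push_cast
    ring_nf

end M4lemmas

/-- In a group, if `x^nn = y^nn = 1` and `y*x = x^r*y`, every element of the
subgroup generated by `x` and `y` has the form `x^i*y^j` with `i,j < nn`. -/
lemma mem_closure_pair_metacyclic {P : Type*} [Group P] (x y : P) (nn r : ℕ) (hnn : 0 < nn)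
    (hx : x ^ nn = 1) (hy : y ^ nn = 1) (hc : y * x = x ^ r * y)
    {p : P} (hp : p ∈ Subgroup.closure {x, y}) :
    ∃ i j : Fin nn, p = x ^ (i : ℕ) * y ^ (j : ℕ) := by
  have swap1 : ∀ k : ℕ, y * x ^ k = x ^ (r * k) * y := by
    intro k
    induction k with
    | zero => simp
    | succ k ih =>
      rw [pow_succ, ← mul_assoc, ih, mul_assoc, hc, ← mul_assoc, ← pow_add, Nat.mul_succ]
  have swapj : ∀ j k : ℕ, y ^ j * x ^ k = x ^ (r ^ j * k) * y ^ j := by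
    intro j
    induction j with
    | zero => simp
    | succ j ih =>
      intro k
      rw [pow_succ, mul_assoc, swap1, ← mul_assoc, ih, mul_assoc, ← pow_succ,
        show r ^ j * (r * k) = r ^ (j+1) * k by ring]
  have hxinv : ∀ i : ℕ, (x ^ i)⁻¹ = x ^ (i * (nn - 1)) := by
    intro i
    refine inv_eq_of_mul_eq_one_right ?_
    rw [← pow_add, show i + i * (nn-1) = nn * i by
      obtain ⟨k, rfl⟩ : ∃ k, nn = k + 1 := ⟨nn - 1, by omega⟩
      rw [Nat.add_sub_cancel]; ring]
    rw [pow_mul, hx, one_pow]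
  have hyinv : ∀ i : ℕ, (y ^ i)⁻¹ = y ^ (i * (nn - 1)) := by
    intro i
    refine inv_eq_of_mul_eq_one_right ?_
    rw [← pow_add, show i + i * (nn-1) = nn * i by
      obtain ⟨k, rfl⟩ : ∃ k, nn = k + 1 := ⟨nn - 1, by omega⟩
      rw [Nat.add_sub_cancel]; ring]
    rw [pow_mul, hy, one_pow]
  let T : Subgroup P :=
    { carrier := {p | ∃ i j : ℕ, p = x ^ i * y ^ j}
      one_mem' := ⟨0, 0, by simp⟩
      mul_mem' := by
        rintro p q ⟨i, j, rfl⟩ ⟨k, l, rfl⟩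
        refine ⟨i + r ^ j * k, j + l, ?_⟩
        rw [mul_assoc, ← mul_assoc (y ^ j), swapj, mul_assoc, ← pow_add, ← mul_assoc, ← pow_add]
      inv_mem' := by
        rintro p ⟨i, j, rfl⟩
        refine ⟨r ^ (j * (nn-1)) * (i * (nn-1)), j * (nn-1), ?_⟩
        rw [mul_inv_rev, hxinv, hyinv, swapj] }
  have hT : Subgroup.closure {x, y} ≤ T := by
    rw [Subgroup.closure_le]
    rintro p (rfl | rfl)
    · exact ⟨1, 0, by simp⟩
    · exact ⟨0, 1, by simp⟩
  obtain ⟨i, j, rfl⟩ := hT hp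
  exact ⟨⟨i % nn, Nat.mod_lt _ hnn⟩, ⟨j % nn, Nat.mod_lt _ hnn⟩,
    by rw [← pow_eq_pow_mod i hx, ← pow_eq_pow_mod j hy]⟩

/-- let `ℓ ≥ 3` be prime and `G = (ℤ/ℓ') ⋊ ⟨Φ⟩` with `ℓ' = 9` if
`ℓ = 3` and `ℓ' = ℓ` otherwise, where `Φ` has order `ℓ'` and acts on `ℤ/ℓ'` (with
generator `m`) by multiplication by `1 + ℓα` (with `α = 0` if `ℓ > 3`); `G` is
presented abstractly by generators `m, Φ` with these relations and `#G = ℓ'²`.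
Then every homomorphism `χ : G → ℤ/ℓ` lifts to a homomorphism `ρ : G → U₄(ℤ/ℓ)`
whose three superdiagonal entries are all equal to `χ` (i.e. the triple Massey
product `⟨χ,χ,χ⟩` contains zero). -/
theorem exists_U4_lift_of_metacyclic (ℓ ℓ' : ℕ) (hℓ : ℓ.Prime) (h3 : 3 ≤ ℓ)
    (hℓ' : ℓ' = if ℓ = 3 then 9 else ℓ)
    (α : ℕ) (hα : 3 < ℓ → α = 0)
    (G : Type*) [Group G] (m Φ : G)
    (hm : orderOf m = ℓ') (hΦ : orderOf Φ = ℓ')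
    (hconj : Φ * m * Φ⁻¹ = m ^ (1 + ℓ * α))
    (hgen : Subgroup.closure {m, Φ} = (⊤ : Subgroup G))
    (hcard : Nat.card G = ℓ' ^ 2)
    (χ : G →* Multiplicative (ZMod ℓ)) :
    ∃ ρ : G →* Matrix (Fin 4) (Fin 4) (ZMod ℓ), ∀ g : G, ∃ u v w : ZMod ℓ,
      ρ g = M4 (Multiplicative.toAdd (χ g)) (Multiplicative.toAdd (χ g))
        (Multiplicative.toAdd (χ g)) u v w := by
  haveI : Fact ℓ.Prime := ⟨hℓ⟩
  haveI : NeZero ℓ := ⟨hℓ.pos.ne'⟩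
  set a : ZMod ℓ := Multiplicative.toAdd (χ m) with ha
  set b : ZMod ℓ := Multiplicative.toAdd (χ Φ) with hb
  set av : ℕ := a.val with hav_def
  have hav : ((av : ℕ) : ZMod ℓ) = a := by rw [hav_def, ZMod.natCast_val, ZMod.cast_id]
  have hl'pos : 0 < ℓ' := by rw [hℓ']; split_ifs <;> omega
  -- arithmetic facts
  obtain ⟨hV0, hV2, hV3, hL2, hL3⟩ :
      (((ℓ' : ℕ) : ZMod ℓ) = 0) ∧ ((ℓ'.choose 2 : ZMod ℓ) = 0) ∧ ((ℓ'.choose 3 : ZMod ℓ) = 0) ∧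
      (((av*(1+ℓ*α)).choose 2 : ZMod ℓ) = (av.choose 2 : ZMod ℓ)) ∧
      (((av*(1+ℓ*α)).choose 3 : ZMod ℓ) = (av.choose 3 : ZMod ℓ) + a * (α : ZMod ℓ)) := by
    rcases eq_or_lt_of_le h3 with h | h
    · -- ℓ = 3
      have hℓ3 : ℓ = 3 := h.symm
      subst hℓ3
      have h9 : ℓ' = 9 := by simpa using hℓ'
      subst h9
      have hv : av < 3 := ZMod.val_lt a
      set t : ℕ := av * α with ht
      have h1 : av * (1 + 3 * α) = av + 3 * t := by rw [ht]; ring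
      have h2 : (av + 3 * t) % 3 = av := by omega
      have h3' : (av + 3 * t) / 3 = t := by omega
      have lucas2 := Choose.choose_modEq_choose_mod_mul_choose_div_nat
        (p := 3) (n := av + 3 * t) (k := 2)
      have lucas3 := Choose.choose_modEq_choose_mod_mul_choose_div_nat
        (p := 3) (n := av + 3 * t) (k := 3)
      rw [h2, h3'] at lucas2 lucas3
      norm_num at lucas2 lucas3
      refine ⟨?_, ?_, ?_, ?_, ?_⟩
      · rw [ZMod.natCast_eq_zero_iff]; norm_num
      · rw [show (9:ℕ).choose 2 = 36 from by decide, ZMod.natCast_eq_zero_iff]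
        norm_num
      · rw [show (9:ℕ).choose 3 = 84 from by decide, ZMod.natCast_eq_zero_iff]
        norm_num
      · rw [h1, (ZMod.natCast_eq_natCast_iff _ _ _).mpr lucas2]
      · rw [h1, (ZMod.natCast_eq_natCast_iff _ _ _).mpr lucas3,
          Nat.choose_eq_zero_of_lt (by omega : av < 3)]
        push_cast [ht]
        rw [hav]
        ring
    · -- ℓ > 3
      have hα0 : α = 0 := hα h
      subst hα0
      have hℓℓ : ℓ' = ℓ := by rw [hℓ']; simp [show ℓ ≠ 3 by omega]
      subst hℓℓ
      refine ⟨ZMod.natCast_self _, ?_, ?_, by norm_num, by push_cast; ring⟩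
      · rw [ZMod.natCast_eq_zero_iff]
        exact hℓ.dvd_choose_self (by norm_num) (by omega)
      · rw [ZMod.natCast_eq_zero_iff]
        exact hℓ.dvd_choose_self (by norm_num) (by omega)
  -- matrices
  set α' : ZMod ℓ := (α : ZMod ℓ) with hα'
  set u₀ : ZMod ℓ := (av.choose 2 : ZMod ℓ) with hu₀
  set v₀ : ZMod ℓ := (av.choose 3 : ZMod ℓ) with hv₀
  set Amat : Matrix (Fin 4) (Fin 4) (ZMod ℓ) := M4 1 1 1 0 0 0 with hAmat
  set Xmat : Matrix (Fin 4) (Fin 4) (ZMod ℓ) := Amat ^ av with hXmat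
  set Ymat : Matrix (Fin 4) (Fin 4) (ZMod ℓ) := M4 b b b 0 0 (-α') with hYmat
  have hXf : Xmat = M4 a a a u₀ v₀ u₀ := by
    rw [hXmat, hAmat, M4_pow]
    exact M4_congr (by rw [hav]; ring) (by rw [hav]; ring) (by rw [hav]; ring)
      (by ring) (by ring) (by ring)
  have hA1 : Amat ^ ℓ' = 1 := by
    rw [hAmat, M4_pow, hV0, hV2, hV3, ← M4_one]
    exact M4_congr (by ring) (by ring) (by ring) (by ring) (by ring) (by ring)
  have hX1 : Xmat ^ ℓ' = 1 := by
    rw [hXmat, ← pow_mul, mul_comm, pow_mul, hA1, one_pow]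
  have hY1 : Ymat ^ ℓ' = 1 := by
    rw [hYmat, M4_pow, hV0, hV2, hV3, ← M4_one]
    exact M4_congr (by ring) (by ring) (by ring) (by ring) (by ring) (by ring)
  have hMc : ((av*(1+ℓ*α) : ℕ) : ZMod ℓ) = a := by
    push_cast
    rw [ZMod.natCast_self, hav]
    ring
  have hXe : Xmat ^ (1+ℓ*α) = M4 a a a u₀ (v₀ + a * α') u₀ := by
    rw [hXmat, ← pow_mul, hAmat, M4_pow, hL2, hL3]
    exact M4_congr (by rw [hMc]; ring) (by rw [hMc]; ring) (by rw [hMc]; ring)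
      (by ring) (by rw [hα']; ring) (by ring)
  have hR3 : Ymat * Xmat = Xmat ^ (1+ℓ*α) * Ymat := by
    rw [hXe, hXf, hYmat, M4_mul, M4_mul]
    exact M4_congr (by ring) (by ring) (by ring) (by ring) (by ring) (by ring)
  -- units
  have hl1 : 1 ≤ ℓ' := hl'pos
  have hXur : Xmat * Xmat ^ (ℓ' - 1) = 1 := by
    rw [← pow_succ', Nat.sub_add_cancel hl1]; exact hX1
  have hXul : Xmat ^ (ℓ' - 1) * Xmat = 1 := by
    rw [← pow_succ, Nat.sub_add_cancel hl1]; exact hX1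
  have hYur : Ymat * Ymat ^ (ℓ' - 1) = 1 := by
    rw [← pow_succ', Nat.sub_add_cancel hl1]; exact hY1
  have hYul : Ymat ^ (ℓ' - 1) * Ymat = 1 := by
    rw [← pow_succ, Nat.sub_add_cancel hl1]; exact hY1
  set Xu : (Matrix (Fin 4) (Fin 4) (ZMod ℓ))ˣ := ⟨Xmat, Xmat ^ (ℓ'-1), hXur, hXul⟩ with hXu
  set Yu : (Matrix (Fin 4) (Fin 4) (ZMod ℓ))ˣ := ⟨Ymat, Ymat ^ (ℓ'-1), hYur, hYul⟩ with hYu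
  have hXu1 : Xu ^ ℓ' = 1 := by
    apply Units.ext
    simp only [Units.val_pow_eq_pow_val, Units.val_one]
    exact hX1
  have hYu1 : Yu ^ ℓ' = 1 := by
    apply Units.ext
    simp only [Units.val_pow_eq_pow_val, Units.val_one]
    exact hY1
  have hRu : Yu * Xu = Xu ^ (1+ℓ*α) * Yu := by
    apply Units.ext
    simp only [Units.val_mul, Units.val_pow_eq_pow_val]
    exact hR3
  -- the graph subgroup
  set x : G × (Matrix (Fin 4) (Fin 4) (ZMod ℓ))ˣ := (m, Xu) with hxd
  set y : G × (Matrix (Fin 4) (Fin 4) (ZMod ℓ))ˣ := (Φ, Yu) with hyd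
  have hmord : m ^ ℓ' = 1 := by rw [← hm]; exact pow_orderOf_eq_one m
  have hΦord : Φ ^ ℓ' = 1 := by rw [← hΦ]; exact pow_orderOf_eq_one Φ
  have hx1 : x ^ ℓ' = 1 := by
    refine Prod.ext_iff.mpr ⟨?_, ?_⟩ <;>
      simp [Prod.pow_fst, Prod.pow_snd, hmord, hXu1, hxd]
  have hy1 : y ^ ℓ' = 1 := by
    refine Prod.ext_iff.mpr ⟨?_, ?_⟩ <;>
      simp [Prod.pow_fst, Prod.pow_snd, hΦord, hYu1, hyd]
  have hyx : y * x = x ^ (1+ℓ*α) * y := by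
    refine Prod.ext_iff.mpr ⟨?_, ?_⟩
    · simp only [Prod.fst_mul, Prod.pow_fst]
      exact mul_inv_eq_iff_eq_mul.mp hconj
    · simp only [Prod.snd_mul, Prod.pow_snd]
      exact hRu
  set Sub := Subgroup.closure {x, y} with hSubd
  have hxmem : x ∈ Sub := Subgroup.subset_closure (by simp)
  have hymem : y ∈ Sub := Subgroup.subset_closure (by simp)
  set f : Fin ℓ' × Fin ℓ' → Sub := fun p =>
    ⟨x ^ (p.1 : ℕ) * y ^ (p.2 : ℕ), mul_mem (pow_mem hxmem _) (pow_mem hymem _)⟩ with hfd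
  have hfsurj : Function.Surjective f := by
    rintro ⟨p, hp⟩
    obtain ⟨i, j, hij⟩ :=
      mem_closure_pair_metacyclic x y ℓ' (1+ℓ*α) hl'pos hx1 hy1 hyx hp
    exact ⟨(i, j), Subtype.ext hij.symm⟩
  haveI : Finite Sub := Finite.of_surjective f hfsurj
  set π : Sub →* G := (MonoidHom.fst G _).comp Sub.subtype with hπd
  have hπs : Function.Surjective π := by
    have hle : Subgroup.closure {m, Φ} ≤ π.range := by
      rw [Subgroup.closure_le]
      rintro g (rfl | rfl)
      · exact ⟨⟨x, hxmem⟩, rfl⟩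
      · exact ⟨⟨y, hymem⟩, rfl⟩
    rw [hgen] at hle
    rw [← MonoidHom.range_eq_top]
    exact top_le_iff.mp hle
  have hcard1 : Nat.card Sub ≤ ℓ' ^ 2 := by
    have h := Nat.card_le_card_of_surjective f hfsurj
    simpa [Nat.card_eq_fintype_card, sq] using h
  have hcard2 : Nat.card G ≤ Nat.card Sub := Nat.card_le_card_of_surjective π hπs
  have hbij : Function.Bijective π :=
    (Nat.bijective_iff_surjective_and_card π).mpr ⟨hπs, by omega⟩
  set e := MulEquiv.ofBijective π hbij with hed
  -- the entries property
  set S : Subgroup (G × (Matrix (Fin 4) (Fin 4) (ZMod ℓ))ˣ) :=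
    { carrier := {p | ∃ u v w : ZMod ℓ,
        ((p.2 : (Matrix (Fin 4) (Fin 4) (ZMod ℓ))ˣ) : Matrix (Fin 4) (Fin 4) (ZMod ℓ)) =
          M4 (Multiplicative.toAdd (χ p.1)) (Multiplicative.toAdd (χ p.1))
            (Multiplicative.toAdd (χ p.1)) u v w}
      one_mem' := ⟨0, 0, 0, by
        simp only [Prod.fst_one, Prod.snd_one, map_one, toAdd_one, Units.val_one]
        exact M4_one.symm⟩
      mul_mem' := by
        rintro p q ⟨u1, v1, w1, h1⟩ ⟨u2, v2, w2, h2⟩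
        have hsum : Multiplicative.toAdd (χ p.1) + Multiplicative.toAdd (χ q.1) =
            Multiplicative.toAdd (χ (p*q).1) := by
          simp [map_mul]
        refine ⟨u1 + u2 + (Multiplicative.toAdd (χ p.1)) * (Multiplicative.toAdd (χ q.1)),
          v1 + v2 + (Multiplicative.toAdd (χ p.1)) * w2 + u1 * (Multiplicative.toAdd (χ q.1)),
          w1 + w2 + (Multiplicative.toAdd (χ p.1)) * (Multiplicative.toAdd (χ q.1)), ?_⟩
        show ((p.2 * q.2 : _ˣ) : Matrix (Fin 4) (Fin 4) (ZMod ℓ)) = _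
        rw [Units.val_mul, h1, h2, M4_mul]
        exact M4_congr hsum hsum hsum rfl rfl rfl
      inv_mem' := by
        rintro p ⟨u, v, w, h⟩
        have hc : Multiplicative.toAdd (χ (p⁻¹).1) = -(Multiplicative.toAdd (χ p.1)) := by
          simp [map_inv]
        set c : ZMod ℓ := Multiplicative.toAdd (χ p.1) with hcd
        set Q : Matrix (Fin 4) (Fin 4) (ZMod ℓ) :=
          M4 (-c) (-c) (-c) (c^2-u) (-v - c^3 + c*w + u*c) (c^2-w) with hQd
        have hPQ : ((p.2 : _ˣ) : Matrix (Fin 4) (Fin 4) (ZMod ℓ)) * Q = 1 := by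
          rw [hQd, h, M4_mul, ← M4_one]
          exact M4_congr (by ring) (by ring) (by ring) (by ring) (by ring) (by ring)
        have hinv : ((p.2⁻¹ : _ˣ) : Matrix (Fin 4) (Fin 4) (ZMod ℓ)) = Q := by
          calc ((p.2⁻¹ : _ˣ) : Matrix (Fin 4) (Fin 4) (ZMod ℓ))
              = ↑p.2⁻¹ * (↑p.2 * Q) := by rw [hPQ, mul_one]
            _ = (↑p.2⁻¹ * ↑p.2) * Q := by rw [mul_assoc]
            _ = Q := by rw [Units.inv_mul, one_mul]
        refine ⟨c^2-u, -v - c^3 + c*w + u*c, c^2-w, ?_⟩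
        show ((p.2⁻¹ : _ˣ) : Matrix (Fin 4) (Fin 4) (ZMod ℓ)) = _
        rw [hc, hinv, hQd] } with hSd
  have hxS : x ∈ S := ⟨u₀, v₀, u₀, by rw [← ha]; exact hXf⟩
  have hyS : y ∈ S := ⟨0, 0, -α', by rw [← hb]⟩
  have hSle : Sub ≤ S := by
    rw [hSubd, Subgroup.closure_le]
    rintro p (rfl | rfl)
    · exact hxS
    · exact hyS
  refine ⟨(Units.coeHom _).comp ((MonoidHom.snd G _).comp
    (Sub.subtype.comp e.symm.toMonoidHom)), ?_⟩
  intro g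
  obtain ⟨u, v, w, huvw⟩ := hSle (e.symm g).2
  have hg1 : ((e.symm g : G × (Matrix (Fin 4) (Fin 4) (ZMod ℓ))ˣ)).1 = g :=
    e.apply_symm_apply g
  rw [hg1] at huvw
  exact ⟨u, v, w, huvw⟩
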